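/- Let a ∈ (0,1], t ∈ R, and let X, Y be n×n Hermitian matrices with a·1 ≤ X ≤ 1 and a·1 ≤ Y ≤ 1. Then ∥X^{±1/2 ± it} − Y^{±1/2 ± it}∥ ≤ (1 + 2|t|) √n · a^{−3/2} · ∥X − Y∥, where ∥·∥ is the operator norm and the matrix power is defined by functional calculus. -/

import Mathlib

open Matrix MeasureTheory
open scoped ComplexOrder

noncomputable section

variable {n : Type*} [Fintype n] [DecidableEq n]

/-- Matrix logarithm via spectral decomposition (junk value 0 for non-Hermitian input). -/
def matLog (M : Matrix n n ℂ) : Matrix n n ℂ :=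
  if h : M.IsHermitian then
    (h.eigenvectorUnitary : Matrix n n ℂ) *
      Matrix.diagonal (fun i => (Real.log (h.eigenvalues i) : ℂ)) *
      (star h.eigenvectorUnitary : Matrix n n ℂ)
  else 0

/-- Complex matrix power via spectral decomposition (junk value 0 for non-Hermitian input). -/
def matCPow (M : Matrix n n ℂ) (z : ℂ) : Matrix n n ℂ :=
  if h : M.IsHermitian then
    (h.eigenvectorUnitary : Matrix n n ℂ) *
      Matrix.diagonal (fun i => ((h.eigenvalues i : ℂ) ^ z)) *
      (star h.eigenvectorUnitary : Matrix n n ℂ)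
  else 0

/-- von Neumann entropy `S(ρ) = -Tr[ρ log ρ]`. -/
def vnEntropy (M : Matrix n n ℂ) : ℝ := -(Matrix.trace (M * matLog M)).re

/-- Quantum relative entropy `D(ρ‖σ) = Tr[ρ (log ρ - log σ)]`. -/
def relEntropy (ρ σ : Matrix n n ℂ) : ℝ := (Matrix.trace (ρ * (matLog ρ - matLog σ))).re

/-- Operator norm of a matrix. -/
def opNorm (M : Matrix n n ℂ) : ℝ := ‖Matrix.toEuclideanCLM (𝕜 := ℂ) M‖

/-- Old Mathlib `Matrix.PosSemidef.sqrt` (removed upstream), restated with its old definition. -/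
def Matrix.PosSemidef.sqrt {M : Matrix n n ℂ} (hA : M.PosSemidef) : Matrix n n ℂ :=
  (hA.1.eigenvectorUnitary : Matrix n n ℂ) *
    Matrix.diagonal (fun i => ((Real.sqrt (hA.1.eigenvalues i) : ℝ) : ℂ)) *
    (star hA.1.eigenvectorUnitary : Matrix n n ℂ)

/-- Trace norm `‖A‖₁ = Tr √(AᴴA)`. -/
def traceNorm (A : Matrix n n ℂ) : ℝ :=
  ((Matrix.posSemidef_conjTranspose_mul_self A).sqrt.trace).re

/-- Positive semidefinite square root (junk value 0 otherwise). -/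
def sqrtPSD (M : Matrix n n ℂ) : Matrix n n ℂ :=
  open scoped Classical in
  if h : M.PosSemidef then h.sqrt else 0

/-- Fidelity `F(ρ,σ) = ‖√ρ √σ‖₁`. -/
def fidelity (ρ σ : Matrix n n ℂ) : ℝ := traceNorm (sqrtPSD ρ * sqrtPSD σ)

/-- Binary entropy (natural logarithm). -/
def binEnt (p : ℝ) : ℝ := -(p * Real.log p) - (1 - p) * Real.log (1 - p)

section ptrace
variable {α β : Type*} [Fintype α] [Fintype β]

/-- Partial trace over the first tensor factor. -/
def ptraceFst (M : Matrix (α × β) (α × β) ℂ) : Matrix β β ℂ :=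
  fun i j => ∑ a : α, M (a, i) (a, j)

/-- Partial trace over the second tensor factor. -/
def ptraceSnd (M : Matrix (α × β) (α × β) ℂ) : Matrix α α ℂ :=
  fun i j => ∑ b : β, M (i, b) (j, b)

end ptrace


set_option linter.unusedSectionVars false

set_option synthInstance.maxHeartbeats 1000000
set_option maxHeartbeats 1000000

lemma le_of_sq_le' {a b : ℝ} (ha : 0 ≤ a) (hb : 0 ≤ b) (h : a^2 ≤ b^2) : a ≤ b := by nlinarith

def frobN {m : Type*} [Fintype m] (A : Matrix m m ℂ) : ℝ :=
  Real.sqrt (∑ i, ∑ j, ‖A i j‖ ^ 2)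

variable {m : Type*} [Fintype m] [DecidableEq m]

lemma frobN_nonneg (A : Matrix m m ℂ) : 0 ≤ frobN A := Real.sqrt_nonneg _

lemma frobN_sq (A : Matrix m m ℂ) : frobN A ^ 2 = ∑ i, ∑ j, ‖A i j‖ ^ 2 := by
  rw [frobN, Real.sq_sqrt]; positivity

lemma sum_sq_eq_trace (A : Matrix m m ℂ) :
    ∑ i, ∑ j, ‖A i j‖ ^ 2 = (Matrix.trace (Aᴴ * A)).re := by
  rw [Matrix.trace]
  simp only [Matrix.diag_apply, Matrix.mul_apply, Matrix.conjTranspose_apply]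
  rw [Finset.sum_comm, Complex.re_sum]
  refine Finset.sum_congr rfl fun i _ => ?_
  rw [Complex.re_sum]
  refine Finset.sum_congr rfl fun j _ => ?_
  have : (star (A j i)) * A j i = (Complex.normSq (A j i) : ℂ) := by
    rw [Complex.star_def, mul_comm, Complex.mul_conj]
  rw [this, Complex.ofReal_re]
  rw [← Complex.sq_norm]

lemma frobN_unitary (U V A : Matrix m m ℂ) (hU : U * star U = 1) (hV : V * star V = 1) :
    frobN (star U * A * V) = frobN A := by
  unfold frobN
  congr 1
  rw [sum_sq_eq_trace, sum_sq_eq_trace]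
  congr 1
  have h1 : (star U * A * V)ᴴ = star V * Aᴴ * U := by
    simp [Matrix.conjTranspose_mul, Matrix.star_eq_conjTranspose, Matrix.mul_assoc]
  rw [h1]
  have h2 : star V * Aᴴ * U * (star U * A * V) = star V * (Aᴴ * A) * V := by
    rw [Matrix.mul_assoc (star V * Aᴴ) U _, ← Matrix.mul_assoc U (star U * A) V,
      ← Matrix.mul_assoc U (star U) A, hU, Matrix.one_mul, ← Matrix.mul_assoc,
      Matrix.mul_assoc (star V) Aᴴ A]
  rw [h2, Matrix.trace_mul_cycle, ← Matrix.mul_assoc, hV, Matrix.one_mul]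

def opNorm' {m : Type*} [Fintype m] [DecidableEq m] (M : Matrix m m ℂ) : ℝ :=
  ‖Matrix.toEuclideanCLM (𝕜 := ℂ) M‖

lemma euclidean_norm_sq (x : EuclideanSpace ℂ m) : ‖x‖ ^ 2 = ∑ i, ‖x i‖ ^ 2 := by
  rw [EuclideanSpace.norm_eq, Real.sq_sqrt]
  positivity

lemma opNorm'_le_frobN (A : Matrix m m ℂ) : opNorm' A ≤ frobN A := by
  refine ContinuousLinearMap.opNorm_le_bound _ (frobN_nonneg A) fun x => ?_
  have hrow : ∀ i, ‖∑ j, A i j * x j‖ ≤ Real.sqrt (∑ j, ‖A i j‖ ^ 2) * ‖x‖ := by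
    intro i
    set v : EuclideanSpace ℂ m := (WithLp.equiv 2 _).symm (fun j => star (A i j)) with hv
    have hinner : (inner ℂ v x : ℂ) = ∑ j, A i j * x j := by
      rw [PiLp.inner_apply]
      simp [hv, mul_comm]
    have := norm_inner_le_norm (𝕜 := ℂ) v x
    rw [hinner] at this
    refine this.trans (mul_le_mul_of_nonneg_right (le_of_eq ?_) (norm_nonneg x))
    rw [EuclideanSpace.norm_eq]
    congr 1
    refine Finset.sum_congr rfl fun j _ => ?_
    simp [hv]
  have key : ‖toEuclideanCLM (𝕜 := ℂ) A x‖ ^ 2 ≤ (frobN A) ^ 2 * ‖x‖ ^ 2 := by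
    rw [euclidean_norm_sq, frobN_sq, Finset.sum_mul]
    refine Finset.sum_le_sum fun i _ => ?_
    have hxi : (toEuclideanCLM (𝕜 := ℂ) A x) i = ∑ j, A i j * x j := by
      have := Matrix.ofLp_toEuclideanCLM (n := m) (𝕜 := ℂ) A x
      have h2 := congrFun this i
      simpa [Matrix.mulVec, dotProduct] using h2
    rw [hxi]
    calc ‖∑ j, A i j * x j‖ ^ 2 ≤ (Real.sqrt (∑ j, ‖A i j‖ ^ 2) * ‖x‖) ^ 2 := by
          apply sq_le_sq' _ (hrow i)
          have := hrow i
          nlinarith [norm_nonneg (∑ j, A i j * x j)]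
      _ = (∑ j, ‖A i j‖ ^ 2) * ‖x‖ ^ 2 := by
          rw [mul_pow, Real.sq_sqrt]; positivity
  have h1 : ‖toEuclideanCLM (𝕜 := ℂ) A x‖ ^ 2 ≤ (frobN A * ‖x‖) ^ 2 := by
    rw [mul_pow]; exact key
  exact le_of_sq_le' (norm_nonneg _) (mul_nonneg (frobN_nonneg A) (norm_nonneg x)) h1

lemma frobN_le_sqrt_card (A : Matrix m m ℂ) :
    frobN A ≤ Real.sqrt (Fintype.card m) * opNorm' A := by
  have hop : 0 ≤ opNorm' A := norm_nonneg _
  have key : frobN A ^ 2 ≤ (Fintype.card m) * opNorm' A ^ 2 := by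
    rw [frobN_sq, Finset.sum_comm]
    have hcol : ∀ j, ∑ i, ‖A i j‖ ^ 2 ≤ opNorm' A ^ 2 := by
      intro j
      set e : EuclideanSpace ℂ m := (WithLp.equiv 2 _).symm (Pi.single j 1) with he
      have hval : ∀ i, (toEuclideanCLM (𝕜 := ℂ) A e) i = A i j := by
        intro i
        rw [he, WithLp.equiv_symm_apply, Matrix.toEuclideanCLM_toLp]
        simp [Matrix.mulVec_single]
      have hb : ‖toEuclideanCLM (𝕜 := ℂ) A e‖ ≤ opNorm' A := by
        have h3 := ContinuousLinearMap.le_opNorm (toEuclideanCLM (𝕜 := ℂ) A) e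
        have he1 : ‖e‖ = 1 := by
          rw [show e = EuclideanSpace.single j (1:ℂ) from rfl, EuclideanSpace.norm_single]
          simp
        rw [he1, mul_one] at h3
        exact h3
      calc ∑ i, ‖A i j‖ ^ 2 = ‖toEuclideanCLM (𝕜 := ℂ) A e‖ ^ 2 := by
            rw [euclidean_norm_sq]
            exact Finset.sum_congr rfl fun i _ => by rw [hval i]
        _ ≤ opNorm' A ^ 2 := by nlinarith [norm_nonneg (toEuclideanCLM (𝕜 := ℂ) A e)]
    calc ∑ j : m, ∑ i, ‖A i j‖ ^ 2 ≤ ∑ j : m, opNorm' A ^ 2 := Finset.sum_le_sum fun j _ => hcol j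
      _ = (Fintype.card m) * opNorm' A ^ 2 := by rw [Finset.sum_const]; simp [mul_comm]
  have h2 : frobN A ^ 2 ≤ (Real.sqrt (Fintype.card m) * opNorm' A) ^ 2 := by
    rw [mul_pow, Real.sq_sqrt (by positivity)]
    exact key
  exact le_of_sq_le' (frobN_nonneg A) (mul_nonneg (Real.sqrt_nonneg _) hop) h2

lemma frobN_mono {c : ℝ} (hc : 0 ≤ c) (P Q : Matrix m m ℂ)
    (h : ∀ i j, ‖P i j‖ ≤ c * ‖Q i j‖) : frobN P ≤ c * frobN Q := by
  have h2 : frobN P ^ 2 ≤ (c * frobN Q) ^ 2 := by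
    rw [frobN_sq, mul_pow, frobN_sq, Finset.mul_sum]
    refine Finset.sum_le_sum fun i _ => ?_
    rw [Finset.mul_sum]
    refine Finset.sum_le_sum fun j _ => ?_
    have := h i j
    nlinarith [norm_nonneg (P i j), norm_nonneg (Q i j)]
  exact le_of_sq_le' (frobN_nonneg P) (mul_nonneg hc (frobN_nonneg Q)) h2

lemma cpow_lipschitz (a : ℝ) (ha : 0 < a) (z : ℂ) (hz : z.re ≤ 1) {x y : ℝ}
    (hx : x ∈ Set.Icc a 1) (hy : y ∈ Set.Icc a 1) :
    ‖(x:ℂ) ^ z - (y:ℂ) ^ z‖ ≤ ‖z‖ * a ^ (z.re - 1) * |x - y| := by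
  set g : ℝ → ℂ := fun w => Complex.exp (z * (Real.log w : ℂ)) with hg
  set g' : ℝ → ℂ := fun w => Complex.exp (z * (Real.log w : ℂ)) * (z * ((w : ℝ)⁻¹ : ℝ)) with hg'
  have hderiv : ∀ w ∈ Set.Icc a 1, HasDerivWithinAt g (g' w) (Set.Icc a 1) w := by
    intro w hw
    have hw0 : (0:ℝ) < w := lt_of_lt_of_le ha hw.1
    have h1 : HasDerivAt Real.log w⁻¹ w := Real.hasDerivAt_log hw0.ne'
    have h2 : HasDerivAt (fun u : ℝ => ((Real.log u : ℝ) : ℂ)) ((w⁻¹ : ℝ) : ℂ) w :=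
      h1.ofReal_comp
    have h3 := (h2.const_mul z).cexp
    exact h3.hasDerivWithinAt
  have hbound : ∀ w ∈ Set.Icc a 1, ‖g' w‖ ≤ ‖z‖ * a ^ (z.re - 1) := by
    intro w hw
    have hw0 : (0:ℝ) < w := lt_of_lt_of_le ha hw.1
    have hre : (z * (Real.log w : ℂ)).re = z.re * Real.log w := by
      simp [Complex.mul_re]
    have hexp : ‖Complex.exp (z * (Real.log w : ℂ))‖ = w ^ z.re := by
      rw [Complex.norm_exp, hre, Real.rpow_def_of_pos hw0, mul_comm]
    rw [hg']
    simp only [norm_mul, hexp]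
    have hinv : ‖((w⁻¹ : ℝ) : ℂ)‖ = w⁻¹ := by
      rw [Complex.norm_real, Real.norm_eq_abs, abs_of_pos (by positivity)]
    rw [hinv]
    have : w ^ z.re * (‖z‖ * w⁻¹) = ‖z‖ * w ^ (z.re - 1) := by
      rw [Real.rpow_sub hw0, Real.rpow_one]
      field_simp
    rw [this]
    have hle : w ^ (z.re - 1) ≤ a ^ (z.re - 1) :=
      Real.rpow_le_rpow_of_nonpos ha hw.1 (by linarith)
    exact mul_le_mul_of_nonneg_left hle (norm_nonneg z)
  have := Convex.norm_image_sub_le_of_norm_hasDerivWithin_le hderiv hbound (convex_Icc a 1) hy hx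
  have hgeq : ∀ w ∈ Set.Icc a 1, g w = (w:ℂ) ^ z := by
    intro w hw
    have hw0 : (0:ℝ) < w := lt_of_lt_of_le ha hw.1
    rw [hg]
    rw [Complex.cpow_def_of_ne_zero (by exact_mod_cast hw0.ne')]
    rw [← Complex.ofReal_log hw0.le, mul_comm]
  rw [hgeq x hx, hgeq y hy, Real.norm_eq_abs] at this
  exact this

lemma eig_bounds {A : Matrix m m ℂ} (hA : A.IsHermitian) (a : ℝ)
    (hAa : (A - ((a:ℝ):ℂ) • 1).PosSemidef) (hA1 : ((1 : Matrix m m ℂ) - A).PosSemidef) :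
    ∀ i, hA.eigenvalues i ∈ Set.Icc a 1 := by
  intro i
  set v : m → ℂ := ⇑(hA.eigenvectorBasis i) with hv
  have hnorm : dotProduct (star v) v = 1 := by
    have h1 := hA.eigenvectorBasis.orthonormal.1 i
    have h2 : (inner ℂ (hA.eigenvectorBasis i) (hA.eigenvectorBasis i) : ℂ) = 1 := by
      rw [inner_self_eq_norm_sq_to_K, h1]; norm_num
    rw [EuclideanSpace.inner_eq_star_dotProduct, dotProduct_comm] at h2
    exact h2
  have hAv : A *ᵥ v = (hA.eigenvalues i : ℂ) • v := by
    rw [hv, hA.mulVec_eigenvectorBasis]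
    ext j
    simp [Complex.real_smul]
  have hdot : dotProduct (star v) (A *ᵥ v) = (hA.eigenvalues i : ℂ) := by
    rw [hAv, dotProduct_smul, hnorm, smul_eq_mul, mul_one]
  constructor
  · have h0 := hAa.dotProduct_mulVec_nonneg v
    have hexp : dotProduct (star v) ((A - ((a:ℝ):ℂ) • 1) *ᵥ v)
        = ((hA.eigenvalues i - a : ℝ) : ℂ) := by
      rw [Matrix.sub_mulVec, dotProduct_sub, hdot]
      rw [Matrix.smul_mulVec, Matrix.one_mulVec, dotProduct_smul, hnorm,
        smul_eq_mul, mul_one]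
      push_cast
      ring
    rw [hexp] at h0
    have := Complex.zero_le_real.mp h0
    linarith
  · have h0 := hA1.dotProduct_mulVec_nonneg v
    have hexp : dotProduct (star v) (((1 : Matrix m m ℂ) - A) *ᵥ v)
        = ((1 - hA.eigenvalues i : ℝ) : ℂ) := by
      rw [Matrix.sub_mulVec, dotProduct_sub, hdot, Matrix.one_mulVec, hnorm]
      push_cast
      ring
    rw [hexp] at h0
    have := Complex.zero_le_real.mp h0
    linarith

def matCPow' {m : Type*} [Fintype m] [DecidableEq m] (M : Matrix m m ℂ) (z : ℂ) : Matrix m m ℂ :=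
  if h : M.IsHermitian then
    (h.eigenvectorUnitary : Matrix m m ℂ) *
      Matrix.diagonal (fun i => ((h.eigenvalues i : ℂ) ^ z)) *
      (star h.eigenvectorUnitary : Matrix m m ℂ)
  else 0

theorem stmt10' (n : ℕ) (a t : ℝ) (ha : 0 < a) (ha1 : a ≤ 1)
    (X Y : Matrix (Fin n) (Fin n) ℂ) (hX : X.IsHermitian) (hY : Y.IsHermitian)
    (hXa : (X - ((a : ℝ) : ℂ) • 1).PosSemidef) (hX1 : ((1 : Matrix (Fin n) (Fin n) ℂ) - X).PosSemidef)
    (hYa : (Y - ((a : ℝ) : ℂ) • 1).PosSemidef) (hY1 : ((1 : Matrix (Fin n) (Fin n) ℂ) - Y).PosSemidef) :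
    ∀ s : ℝ, (s = 1 / 2 ∨ s = -(1 / 2)) → ∀ u : ℝ, (u = t ∨ u = -t) →
      opNorm' (matCPow' X ((s : ℂ) + (u : ℂ) * Complex.I) -
          matCPow' Y ((s : ℂ) + (u : ℂ) * Complex.I)) ≤
        (1 + 2 * |t|) * Real.sqrt n * a ^ (-(3 : ℝ) / 2) * opNorm' (X - Y) := by
  intro s hs u hu
  set z : ℂ := (s : ℂ) + (u : ℂ) * Complex.I with hz
  have hzre : z.re = s := by simp [hz]
  set U : Matrix (Fin n) (Fin n) ℂ := (hX.eigenvectorUnitary : Matrix (Fin n) (Fin n) ℂ) with hUdef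
  set V : Matrix (Fin n) (Fin n) ℂ := (hY.eigenvectorUnitary : Matrix (Fin n) (Fin n) ℂ) with hVdef
  have hUs : star U * U = 1 := Unitary.coe_star_mul_self hX.eigenvectorUnitary
  have hUss : U * star U = 1 := Unitary.coe_mul_star_self hX.eigenvectorUnitary
  have hVs : star V * V = 1 := Unitary.coe_star_mul_self hY.eigenvectorUnitary
  have hVss : V * star V = 1 := Unitary.coe_mul_star_self hY.eigenvectorUnitary
  set lam := hX.eigenvalues with hlam
  set mu := hY.eigenvalues with hmu
  set Dfl : Matrix (Fin n) (Fin n) ℂ := Matrix.diagonal (fun i => ((lam i : ℂ) ^ z)) with hDfl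
  set Dfm : Matrix (Fin n) (Fin n) ℂ := Matrix.diagonal (fun i => ((mu i : ℂ) ^ z)) with hDfm
  set W : Matrix (Fin n) (Fin n) ℂ := star U * V with hW
  set D : Matrix (Fin n) (Fin n) ℂ := matCPow' X z - matCPow' Y z with hD
  have hXpow : matCPow' X z = U * Dfl * star U := by rw [matCPow', dif_pos hX]
  have hYpow : matCPow' Y z = V * Dfm * star V := by rw [matCPow', dif_pos hY]
  -- P = star U * D * V
  have hP : star U * D * V = Dfl * W - W * Dfm := by
    rw [hD, hXpow, hYpow]
    rw [Matrix.mul_sub, Matrix.sub_mul]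
    congr 1
    · simp only [Matrix.mul_assoc]
      rw [← Matrix.mul_assoc (star U) U, hUs, Matrix.one_mul]
    · simp only [Matrix.mul_assoc]
      rw [hVs, Matrix.mul_one, hW, Matrix.mul_assoc]
  have hQ : star U * (X - Y) * V =
      Matrix.diagonal (fun i => ((lam i : ℂ))) * W - W * Matrix.diagonal (fun i => ((mu i : ℂ))) := by
    nth_rewrite 1 [hX.spectral_theorem, hY.spectral_theorem]
    rw [Unitary.conjStarAlgAut_apply, Unitary.conjStarAlgAut_apply]
    rw [Matrix.mul_sub, Matrix.sub_mul]
    congr 1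
    · simp only [Matrix.mul_assoc]
      rw [← Matrix.mul_assoc (star U) U, hUs, Matrix.one_mul]
      congr 1
    · simp only [Matrix.mul_assoc]
      rw [hVs, Matrix.mul_one, hW, Matrix.mul_assoc]
      congr 1
  -- eigenvalue bounds
  have hlamB := eig_bounds hX a hXa hX1
  have hmuB := eig_bounds hY a hYa hY1
  -- Lipschitz constant
  set L : ℝ := ‖z‖ * a ^ (s - 1) with hL
  have hL0 : 0 ≤ L := mul_nonneg (norm_nonneg _) (Real.rpow_nonneg ha.le _)
  have hentry : ∀ i j, ‖(star U * D * V) i j‖ ≤ L * ‖(star U * (X - Y) * V) i j‖ := by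
    intro i j
    rw [hP, hQ]
    simp only [hDfl, hDfm, Matrix.sub_apply, Matrix.diagonal_mul, Matrix.mul_diagonal]
    rw [show (lam i : ℂ) ^ z * W i j - W i j * (mu j : ℂ) ^ z
        = ((lam i : ℂ) ^ z - (mu j : ℂ) ^ z) * W i j by ring,
      show (lam i : ℂ) * W i j - W i j * (mu j : ℂ)
        = ((lam i : ℂ) - (mu j : ℂ)) * W i j by ring]
    rw [norm_mul, norm_mul]
    have hcast : ‖(lam i : ℂ) - (mu j : ℂ)‖ = |lam i - mu j| := by
      rw [show ((lam i : ℂ) - (mu j : ℂ)) = ((lam i - mu j : ℝ) : ℂ) by push_cast; ring,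
        Complex.norm_real, Real.norm_eq_abs]
    have hlip : ‖(lam i : ℂ) ^ z - (mu j : ℂ) ^ z‖ ≤ L * ‖(lam i : ℂ) - (mu j : ℂ)‖ := by
      have h := cpow_lipschitz a ha z (by rw [hzre]; rcases hs with h | h <;> rw [h] <;> norm_num)
        (hlamB i) (hmuB j)
      rw [hzre] at h
      rw [hcast, hL]
      exact h
    calc ‖(lam i : ℂ) ^ z - (mu j : ℂ) ^ z‖ * ‖W i j‖
        ≤ (L * ‖(lam i : ℂ) - (mu j : ℂ)‖) * ‖W i j‖ :=
          mul_le_mul_of_nonneg_right hlip (norm_nonneg _)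
      _ = L * (‖(lam i : ℂ) - (mu j : ℂ)‖ * ‖W i j‖) := by ring
  -- chain
  have c1 : opNorm' D ≤ frobN D := opNorm'_le_frobN D
  have c2 : frobN D = frobN (star U * D * V) := (frobN_unitary U V D hUss hVss).symm
  have c3 : frobN (star U * D * V) ≤ L * frobN (star U * (X - Y) * V) := by
    exact frobN_mono hL0 _ _ hentry
  have c4 : frobN (star U * (X - Y) * V) = frobN (X - Y) := frobN_unitary U V _ hUss hVss
  have c5 : frobN (X - Y) ≤ Real.sqrt n * opNorm' (X - Y) := by
    have := frobN_le_sqrt_card (X - Y)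
    rwa [Fintype.card_fin] at this
  have hLle : L ≤ (1 + 2 * |t|) * a ^ (-(3:ℝ) / 2) := by
    have h1 : ‖z‖ ≤ 1 + 2 * |t| := by
      calc ‖z‖ ≤ ‖(s:ℂ)‖ + ‖(u:ℂ) * Complex.I‖ := norm_add_le _ _
        _ = |s| + |u| := by
            rw [norm_mul, Complex.norm_real, Complex.norm_I, mul_one, Complex.norm_real,
              Real.norm_eq_abs, Real.norm_eq_abs]
        _ ≤ 1 + 2 * |t| := by
            have hs' : |s| = 1/2 := by rcases hs with h | h <;> rw [h] <;> norm_num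
            have hu' : |u| = |t| := by rcases hu with h | h <;> rw [h] <;> simp [abs_neg]
            rw [hs', hu']
            have := abs_nonneg t
            linarith
    have h2 : a ^ (s - 1) ≤ a ^ (-(3:ℝ) / 2) := by
      apply Real.rpow_le_rpow_of_exponent_ge ha ha1
      rcases hs with h | h <;> rw [h] <;> norm_num
    calc L = ‖z‖ * a ^ (s - 1) := hL
      _ ≤ (1 + 2 * |t|) * a ^ (-(3:ℝ) / 2) :=
          mul_le_mul h1 h2 (Real.rpow_nonneg ha.le _) (by positivity)
  have hB0 : 0 ≤ Real.sqrt n * opNorm' (X - Y) :=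
    mul_nonneg (Real.sqrt_nonneg _) (norm_nonneg _)
  calc opNorm' D ≤ L * frobN (X - Y) := by rw [← c4]; exact (c1.trans (c2.le.trans c3))
    _ ≤ L * (Real.sqrt n * opNorm' (X - Y)) := mul_le_mul_of_nonneg_left c5 hL0
    _ ≤ ((1 + 2 * |t|) * a ^ (-(3:ℝ) / 2)) * (Real.sqrt n * opNorm' (X - Y)) :=
        mul_le_mul_of_nonneg_right hLle hB0
    _ = (1 + 2 * |t|) * Real.sqrt n * a ^ (-(3:ℝ) / 2) * opNorm' (X - Y) := by ring


/-- Lipschitz-type continuity of `X ↦ X^{±1/2 ± it}` on `a·1 ≤ X ≤ 1`. -/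
theorem stmt10 (n : ℕ) (a t : ℝ) (ha : 0 < a) (ha1 : a ≤ 1)
    (X Y : Matrix (Fin n) (Fin n) ℂ) (hX : X.IsHermitian) (hY : Y.IsHermitian)
    (hXa : (X - ((a : ℝ) : ℂ) • 1).PosSemidef) (hX1 : ((1 : Matrix (Fin n) (Fin n) ℂ) - X).PosSemidef)
    (hYa : (Y - ((a : ℝ) : ℂ) • 1).PosSemidef) (hY1 : ((1 : Matrix (Fin n) (Fin n) ℂ) - Y).PosSemidef) :
    ∀ s : ℝ, (s = 1 / 2 ∨ s = -(1 / 2)) → ∀ u : ℝ, (u = t ∨ u = -t) →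
      opNorm (matCPow X ((s : ℂ) + (u : ℂ) * Complex.I) -
          matCPow Y ((s : ℂ) + (u : ℂ) * Complex.I)) ≤
        (1 + 2 * |t|) * Real.sqrt n * a ^ (-(3 : ℝ) / 2) * opNorm (X - Y) := by
  exact stmt10' n a t ha ha1 X Y hX hY hXa hX1 hYa hY1

end
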